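/- arXiv:1312.0986 — 2 statements merged into one kernel-verified Lean document; each statement's English description precedes it below -/
import Mathlib

section
/- Let ω : ℝⁿ → (0,∞) be a positive measurable function that is submultiplicative (ω(x+y) ≤ ω(x)ω(y) for all x,y) and integrable on some neighborhood of the origin. Then ω is exponentially moderate: there exist constants A > 0 and a ≥ 0 such that ω(x+y) ≤ A ω(y) e^{a|x|} for all x, y ∈ ℝⁿ. -/
open MeasureTheory

/-- A positive measurable submultiplicative function that is integrable near the origin
is exponentially moderate. -/
theorem submultiplicative_is_exponentially_moderate {n : ℕ}
    (ω : EuclideanSpace ℝ (Fin n) → ℝ)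
    (hpos : ∀ x, 0 < ω x) (hmeas : Measurable ω)
    (hsub : ∀ x y, ω (x + y) ≤ ω x * ω y)
    (hint : ∃ U ∈ nhds (0 : EuclideanSpace ℝ (Fin n)), IntegrableOn ω U volume) :
    ∃ A > (0 : ℝ), ∃ a ≥ (0 : ℝ), ∀ x y, ω (x + y) ≤ A * ω y * Real.exp (a * ‖x‖) := by
  classical
  obtain ⟨U, hU, hintU⟩ := hint
  -- find r > 0 with closedBall 0 (2r) ⊆ U
  obtain ⟨ε, hε, hball⟩ := Metric.nhds_basis_closedBall.mem_iff.mp hU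
  set r : ℝ := ε / 2 with hr_def
  have hr : 0 < r := by positivity
  have h2r : Metric.closedBall (0 : EuclideanSpace ℝ (Fin n)) (2 * r) ⊆ U := by
    have : 2 * r = ε := by ring
    rwa [this]
  have hint2 : IntegrableOn ω (Metric.closedBall (0 : EuclideanSpace ℝ (Fin n)) (2 * r)) volume :=
    hintU.mono_set h2r
  set B : Set (EuclideanSpace ℝ (Fin n)) := Metric.closedBall 0 r with hB_def
  set K : ENNReal := ∫⁻ z in Metric.closedBall (0 : EuclideanSpace ℝ (Fin n)) (2 * r), ENNReal.ofReal (ω z) with hK_def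
  have hKfin : K < ⊤ := by
    have := hint2.2
    rwa [hasFiniteIntegral_iff_ofReal
      (Filter.Eventually.of_forall fun z => (hpos z).le)] at this
  set I : ENNReal := ∫⁻ y in B, ENNReal.ofReal (ω y)⁻¹ with hI_def
  have hImeas : Measurable fun y : EuclideanSpace ℝ (Fin n) => ENNReal.ofReal (ω y)⁻¹ :=
    (hmeas.inv).ennreal_ofReal
  have hIpos : 0 < I := by
    rw [hI_def, lintegral_pos_iff_support hImeas]
    have hsupp : Function.support (fun y : EuclideanSpace ℝ (Fin n) => ENNReal.ofReal (ω y)⁻¹) = Set.univ := by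
      ext y
      simp only [Function.mem_support, Set.mem_univ, iff_true]
      exact (ENNReal.ofReal_pos.mpr (inv_pos.mpr (hpos y))).ne'
    rw [hsupp, Measure.restrict_apply MeasurableSet.univ, Set.univ_inter]
    exact Metric.measure_closedBall_pos volume _ hr
  -- key pointwise bound on the ball of radius r
  have hbound : ∀ x : EuclideanSpace ℝ (Fin n), ‖x‖ ≤ r → ENNReal.ofReal (ω x) * I ≤ K := by
    intro x hx
    have step1 : ENNReal.ofReal (ω x) * I ≤ ∫⁻ y in B, ENNReal.ofReal (ω (x - y)) := by
      rw [hI_def, ← lintegral_const_mul _ hImeas]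
      refine setLIntegral_mono (hmeas.comp (measurable_const.sub measurable_id)).ennreal_ofReal
        fun y _ => ?_
      rw [← ENNReal.ofReal_mul (hpos x).le]
      refine ENNReal.ofReal_le_ofReal ?_
      have h1 : ω x ≤ ω (x - y) * ω y := by
        have := hsub (x - y) y
        rwa [sub_add_cancel] at this
      rw [mul_inv_le_iff₀ (hpos y)] at *
      exact h1
    have step2 : (∫⁻ y in B, ENNReal.ofReal (ω (x - y))) ≤ K := by
      have hmp : MeasurePreserving (fun t : EuclideanSpace ℝ (Fin n) => x - t) volume volume :=
        Measure.measurePreserving_sub_left volume x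
      have hemb : MeasurableEmbedding (fun t : EuclideanSpace ℝ (Fin n) => x - t) :=
        (MeasurableEquiv.subLeft x).measurableEmbedding
      have heq := hmp.setLIntegral_comp_emb hemb (fun z => ENNReal.ofReal (ω z)) B
      rw [heq, hK_def]
      refine lintegral_mono_set ?_
      rintro z ⟨y, hy, rfl⟩
      have hy' : ‖y‖ ≤ r := by simpa [hB_def] using hy
      have : ‖x - y‖ ≤ ‖x‖ + ‖y‖ := norm_sub_le x y
      simp only [Metric.mem_closedBall, dist_zero_right]
      linarith
    exact step1.trans step2
  -- turn into a real bound
  have hIfin : I < ⊤ := by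
    by_contra h
    have hI : I = ⊤ := by simpa using h
    have := hbound 0 (by simpa using hr.le)
    rw [hI, ENNReal.mul_top (ENNReal.ofReal_pos.mpr (hpos 0)).ne'] at this
    exact (hKfin.trans_le (le_of_eq rfl)).not_ge (by simpa using this)
  set C₀ : ℝ := (K / I).toReal with hC₀_def
  have hCB : ∀ x : EuclideanSpace ℝ (Fin n), ‖x‖ ≤ r → ω x ≤ C₀ := by
    intro x hx
    have h := hbound x hx
    have h2 : ENNReal.ofReal (ω x) ≤ K / I := ENNReal.le_div_iff_mul_le (Or.inl hIpos.ne')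
      (Or.inl hIfin.ne) |>.mpr h
    have hfin : K / I ≠ ⊤ := by
      simp only [Ne, ENNReal.div_eq_top]
      push_neg
      exact ⟨fun _ => (hIpos.ne').elim, fun hK => absurd hK hKfin.ne⟩
    exact (ENNReal.ofReal_le_iff_le_toReal hfin).mp h2
  set C : ℝ := max C₀ 1 with hC_def
  have hC1 : (1 : ℝ) ≤ C := le_max_right _ _
  have hC0 : (0 : ℝ) < C := lt_of_lt_of_le one_pos hC1
  have hCB' : ∀ x : EuclideanSpace ℝ (Fin n), ‖x‖ ≤ r → ω x ≤ C := fun x hx => (hCB x hx).trans (le_max_left _ _)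
  -- growth by induction
  have key : ∀ k : ℕ, ∀ x : EuclideanSpace ℝ (Fin n), ‖x‖ ≤ (k + 1) * r → ω x ≤ C ^ (k + 1) := by
    intro k
    induction k with
    | zero => intro x hx; simpa using hCB' x (by simpa using hx)
    | succ k ih =>
      intro x hx
      by_cases hcase : ‖x‖ ≤ (k + 1) * r
      · calc ω x ≤ C ^ (k + 1) := ih x hcase
          _ ≤ C ^ (k + 2) := pow_le_pow_right₀ hC1 (by omega)
      · push_neg at hcase
        have hx0 : (0:ℝ) < ‖x‖ := lt_trans (by positivity) hcase
        set t : ℝ := ((k : ℝ) + 1) * r / ‖x‖ with ht_def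
        have ht0 : 0 < t := by positivity
        have ht1 : t ≤ 1 := by
          rw [ht_def, div_le_one hx0]; exact hcase.le
        have hxsplit : x = t • x + (1 - t) • x := by
          rw [← add_smul]; ring_nf; simp
        have h1 : ‖t • x‖ ≤ ((k : ℝ) + 1) * r := by
          rw [norm_smul, Real.norm_eq_abs, abs_of_pos ht0, ht_def,
            div_mul_cancel₀ _ hx0.ne']
        have h2 : ‖(1 - t) • x‖ ≤ r := by
          rw [norm_smul, Real.norm_eq_abs, abs_of_nonneg (by linarith), ht_def]
          rw [sub_mul, one_mul, div_mul_cancel₀ _ hx0.ne']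
          have : ‖x‖ ≤ ((k:ℝ) + 1 + 1) * r := by
            have := hx; push_cast at this ⊢; linarith
          linarith
        calc ω x = ω (t • x + (1 - t) • x) := by rw [← hxsplit]
          _ ≤ ω (t • x) * ω ((1 - t) • x) := hsub _ _
          _ ≤ C ^ (k + 1) * C := by
              apply mul_le_mul (ih _ (by push_cast; exact h1)) (hCB' _ h2)
                (hpos _).le (by positivity)
          _ = C ^ (k + 2) := by ring
  -- global exponential bound
  set a : ℝ := Real.log C / r with ha_def
  have ha0 : 0 ≤ a := div_nonneg (Real.log_nonneg hC1) hr.le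
  have hglob : ∀ x : EuclideanSpace ℝ (Fin n), ω x ≤ C ^ 2 * Real.exp (a * ‖x‖) := by
    intro x
    set k : ℕ := ⌈‖x‖ / r⌉₊ with hk_def
    have hxk : ‖x‖ ≤ (k + 1) * r := by
      have h1 : ‖x‖ / r ≤ k := Nat.le_ceil _
      have h2 : ‖x‖ ≤ k * r := by
        rw [div_le_iff₀ hr] at h1; exact h1
      nlinarith
    have hk2 : (k : ℝ) ≤ ‖x‖ / r + 1 := by
      have := Nat.ceil_lt_add_one (a := ‖x‖ / r) (by positivity)
      linarith
    have h3 : ω x ≤ C ^ (k + 1) := key k x hxk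
    have h4 : C ^ (k + 1) = Real.exp (((k : ℝ) + 1) * Real.log C) := by
      rw [← Real.rpow_natCast C (k + 1), Real.rpow_def_of_pos hC0]
      push_cast
      ring_nf
    have h5 : ((k : ℝ) + 1) * Real.log C ≤ (‖x‖ / r + 2) * Real.log C :=
      mul_le_mul_of_nonneg_right (by linarith) (Real.log_nonneg hC1)
    have h6 : (‖x‖ / r + 2) * Real.log C = 2 * Real.log C + a * ‖x‖ := by
      rw [ha_def]; field_simp; ring
    calc ω x ≤ Real.exp (((k : ℝ) + 1) * Real.log C) := h4 ▸ h3
      _ ≤ Real.exp ((‖x‖ / r + 2) * Real.log C) := Real.exp_le_exp.mpr h5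
      _ = C ^ 2 * Real.exp (a * ‖x‖) := by
          have hC2 : Real.exp (2 * Real.log C) = C ^ 2 := by
            have h7 : (2 : ℝ) * Real.log C = Real.log (C ^ 2) := by
              rw [Real.log_pow]; norm_num
            rw [h7, Real.exp_log (by positivity)]
          rw [h6, Real.exp_add, hC2]
  refine ⟨C ^ 2, by positivity, a, ha0, fun x y => ?_⟩
  calc ω (x + y) ≤ ω x * ω y := hsub x y
    _ ≤ (C ^ 2 * Real.exp (a * ‖x‖)) * ω y :=
        mul_le_mul_of_nonneg_right (hglob x) (hpos y).le
    _ = C ^ 2 * ω y * Real.exp (a * ‖x‖) := by ring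
end

section
/- Let ψ, γ ∈ L²(ℝⁿ) with (γ, ψ)_{L²} ≠ 0. Then for every f in the Schwartz class 𝒮(ℝⁿ), the inversion formula holds pointwise: f(t) = (1/(γ,ψ)_{L²}) ∫∫_{ℝ²ⁿ} V_ψf(x,ξ) e^{2πiξ·t} γ(t−x) dξ dx, where the double integral converges absolutely when ψ, γ ∈ 𝒮(ℝⁿ). -/
open MeasureTheory Real RealInnerProductSpace SchwartzMap

open FourierTransform ContDiff Filter in
lemma iteratedFDeriv_comp_sub'' {E F : Type*} [NormedAddCommGroup E] [NormedSpace ℝ E]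
    [NormedAddCommGroup F] [NormedSpace ℝ F] {u : E → F} (hu : ContDiff ℝ (⊤ : ℕ∞) u) (x : E) (j : ℕ) :
    ∀ s, iteratedFDeriv ℝ j (fun y => u (y - x)) s = iteratedFDeriv ℝ j u (s - x) := by
  induction j with
  | zero => intro s; ext m; simp
  | succ j ih =>
    intro s
    have hfun : (iteratedFDeriv ℝ j (fun y => u (y - x)))
        = fun y => iteratedFDeriv ℝ j u (y - x) := funext ih
    have h2 : DifferentiableAt ℝ (iteratedFDeriv ℝ j u) (s - x) :=
      (hu.differentiable_iteratedFDeriv (by exact_mod_cast WithTop.coe_lt_top j)) (s - x)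
    have h1 : HasFDerivAt (fun y : E => y - x) (ContinuousLinearMap.id ℝ E) s :=
      (hasFDerivAt_id s).sub_const x
    have hder : HasFDerivAt (fun y : E => iteratedFDeriv ℝ j u (y - x))
        (fderiv ℝ (iteratedFDeriv ℝ j u) (s - x)) s := by
      exact h2.hasFDerivAt.comp s h1
    ext m
    rw [iteratedFDeriv_succ_apply_left, iteratedFDeriv_succ_apply_left, hfun, hder.fderiv]

/-- The short-time Fourier transform `V_ψ f (x, ξ) = ∫ f(t) conj(ψ(t-x)) e^{-2πi ξ·t} dt`. -/
noncomputable def STFT {n : ℕ} (f ψ : EuclideanSpace ℝ (Fin n) → ℂ)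
    (x ξ : EuclideanSpace ℝ (Fin n)) : ℂ :=
  ∫ t, f t * (starRingEnd ℂ) (ψ (t - x)) *
    Complex.exp ((-(2 * Real.pi * ⟪ξ, t⟫) : ℝ) * Complex.I)

section aux
open FourierTransform ContDiff Filter

noncomputable def conjCLM : ℂ →L[ℝ] ℂ := Complex.conjLIE.toLinearIsometry.toContinuousLinearMap

@[simp] lemma conjCLM_apply (z : ℂ) : conjCLM z = (starRingEnd ℂ) z := rfl

noncomputable def mulConjB : ℂ →L[ℝ] ℂ →L[ℝ] ℂ :=
  (ContinuousLinearMap.mul ℝ ℂ).bilinearComp (ContinuousLinearMap.id ℝ ℂ) conjCLM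

@[simp] lemma mulConjB_apply (a b : ℂ) : mulConjB a b = a * (starRingEnd ℂ) b := rfl

section main
variable {n : ℕ}

local notation "V" => EuclideanSpace ℝ (Fin n)

lemma hasTemperateGrowth_shift (ψ : 𝓢(V, ℂ)) (x : V) :
    Function.HasTemperateGrowth (fun s : V => ψ (s - x)) := by
  refine ⟨(ψ.smooth ⊤).comp (contDiff_id.sub contDiff_const), fun j => ?_⟩
  refine ⟨0, SchwartzMap.seminorm ℝ 0 j ψ, fun s => ?_⟩
  rw [iteratedFDeriv_comp_sub'' (ψ.smooth ⊤) x j s]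
  simpa using ψ.norm_iteratedFDeriv_le_seminorm ℝ j (s - x)

noncomputable def shiftMul (f ψ : 𝓢(V, ℂ)) (x : V) : 𝓢(V, ℂ) :=
  SchwartzMap.bilinLeftCLM mulConjB (hasTemperateGrowth_shift ψ x) f

lemma shiftMul_apply (f ψ : 𝓢(V, ℂ)) (x s : V) :
    shiftMul f ψ x s = f s * (starRingEnd ℂ) (ψ (s - x)) := rfl

lemma stft_eq (f ψ : 𝓢(V, ℂ)) (x ξ : V) :
    STFT (⇑f) (⇑ψ) x ξ = 𝓕 (⇑(shiftMul f ψ x)) ξ := by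
  rw [Real.fourier_eq']
  unfold STFT
  refine integral_congr_ae (Filter.Eventually.of_forall fun s => ?_)
  show f s * (starRingEnd ℂ) (ψ (s - x)) * _ = _ • (shiftMul f ψ x) s
  rw [shiftMul_apply, smul_eq_mul]
  ring_nf
  rw [real_inner_comm s ξ]
  ring_nf

lemma norm_deriv_conj_shift (ψ : 𝓢(V, ℂ)) (x s : V) (m : ℕ) :
    ‖iteratedFDeriv ℝ m (fun y : V => (starRingEnd ℂ) (ψ (y - x))) s‖ ≤
      SchwartzMap.seminorm ℝ 0 m ψ := by
  have hh : (fun y : V => (starRingEnd ℂ) (ψ (y - x)))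
      = ⇑Complex.conjLIE ∘ (fun y : V => ψ (y - x)) := rfl
  rw [hh, LinearIsometryEquiv.norm_iteratedFDeriv_comp_left,
    iteratedFDeriv_comp_sub'' (ψ.smooth ⊤) x m s]
  exact ψ.norm_iteratedFDeriv_le_seminorm ℝ m (s - x)

lemma contDiff_conj_shift (ψ : 𝓢(V, ℂ)) (x : V) :
    ContDiff ℝ ∞ (fun y : V => (starRingEnd ℂ) (ψ (y - x))) := by
  have hh : (fun y : V => (starRingEnd ℂ) (ψ (y - x)))
      = ⇑conjCLM ∘ (fun y : V => ψ (y - x)) := rfl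
  rw [hh]
  exact conjCLM.contDiff.comp ((ψ.smooth ⊤).comp (contDiff_id.sub contDiff_const))

lemma shiftMul_deriv_bound (f ψ : 𝓢(V, ℂ)) (x : V) (j : ℕ) (s : V) :
    ‖iteratedFDeriv ℝ j (⇑(shiftMul f ψ x)) s‖ ≤
      ∑ i ∈ Finset.range (j + 1), (j.choose i : ℝ) * ‖iteratedFDeriv ℝ i (⇑f) s‖ *
        SchwartzMap.seminorm ℝ 0 (j - i) ψ := by
  have hcoe : ⇑(shiftMul f ψ x)
      = fun s : V => (⇑f) s * ((fun y : V => (starRingEnd ℂ) (ψ (y - x))) s) := rfl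
  rw [hcoe]
  refine le_trans (norm_iteratedFDeriv_mul_le (𝕜 := ℝ) (f.smooth ⊤)
    (contDiff_conj_shift ψ x) s (by exact_mod_cast le_top)) ?_
  refine Finset.sum_le_sum fun i _ => ?_
  have := norm_deriv_conj_shift ψ x s (j - i)
  gcongr

noncomputable def Abd (f ψ : 𝓢(V, ℂ)) (j : ℕ) : ℝ :=
  ∑ i ∈ Finset.range (j + 1), (j.choose i : ℝ) * (∫ s : V, ‖iteratedFDeriv ℝ i (⇑f) s‖) *
    SchwartzMap.seminorm ℝ 0 (j - i) ψ

lemma Abd_nonneg (f ψ : 𝓢(V, ℂ)) (j : ℕ) : 0 ≤ Abd f ψ j := by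
  refine Finset.sum_nonneg fun i _ => ?_
  have h1 : 0 ≤ ∫ s : V, ‖iteratedFDeriv ℝ i (⇑f) s‖ := integral_nonneg fun s => norm_nonneg _
  have h2 : (0:ℝ) ≤ SchwartzMap.seminorm ℝ 0 (j - i) ψ := apply_nonneg _ _
  positivity

lemma integrable_norm_iteratedFDeriv (f : 𝓢(V, ℂ)) (i : ℕ) :
    Integrable (fun s : V => ‖iteratedFDeriv ℝ i (⇑f) s‖) := by
  simpa using SchwartzMap.integrable_pow_mul_iteratedFDeriv (volume : Measure V) f 0 i

lemma integral_deriv_shiftMul_le (f ψ : 𝓢(V, ℂ)) (x : V) (j : ℕ) :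
    ∫ s : V, ‖iteratedFDeriv ℝ j (⇑(shiftMul f ψ x)) s‖ ≤ Abd f ψ j := by
  have hle := integral_mono (μ := (volume : Measure V))
    (integrable_norm_iteratedFDeriv (shiftMul f ψ x) j)
    (by
      apply integrable_finset_sum
      intro i _
      exact ((integrable_norm_iteratedFDeriv f i).const_mul _).mul_const _)
    (shiftMul_deriv_bound f ψ x j)
  refine hle.trans (le_of_eq ?_)
  rw [integral_finset_sum _ (fun i _ =>
    ((integrable_norm_iteratedFDeriv f i).const_mul _).mul_const _)]
  unfold Abd
  refine Finset.sum_congr rfl fun i _ => ?_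
  rw [integral_mul_const, integral_const_mul]

lemma fourier_decay (f ψ : 𝓢(V, ℂ)) : ∃ C : ℝ, 0 ≤ C ∧ ∀ (x ξ : V),
    ‖𝓕 (⇑(shiftMul f ψ x)) ξ‖ ≤ C * ((1 + ‖ξ‖) ^ (n + 1))⁻¹ := by
  set S : ℝ := ∑ j ∈ Finset.range (n + 2), Abd f ψ j with hS
  have hS0 : 0 ≤ S := Finset.sum_nonneg fun j _ => Abd_nonneg f ψ j
  set C₀ : ℝ := 2 ^ (n + 1) * S with hC₀
  have hC₀0 : 0 ≤ C₀ := by positivity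
  have key : ∀ (x ξ : V) (m : ℕ), m ≤ n + 1 →
      ‖ξ‖ ^ m * ‖𝓕 (⇑(shiftMul f ψ x)) ξ‖ ≤ C₀ := by
    intro x ξ m hm
    have h := Real.pow_mul_norm_iteratedFDeriv_fourier_le
      (f := ⇑(shiftMul f ψ x)) (K := (0 : ℕ∞)) (N := ((n + 1 : ℕ) : ℕ∞))
      ((shiftMul f ψ x).smooth _)
      (fun k m _ _ => SchwartzMap.integrable_pow_mul_iteratedFDeriv
        (volume : Measure V) (shiftMul f ψ x) k m)
      (k := 0) (n := m) le_rfl (by exact_mod_cast hm) ξ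
    simp only [pow_zero, one_mul, norm_iteratedFDeriv_zero, Finset.range_one,
      Finset.sum_product, Finset.sum_singleton] at h
    rw [Finset.sum_range_one] at h
    simp only [pow_zero, one_mul] at h
    refine h.trans ?_
    have h3 : ∑ j ∈ Finset.range (m + 1), ∫ v : V, ‖iteratedFDeriv ℝ j (⇑(shiftMul f ψ x)) v‖
        ≤ S := by
      refine le_trans (Finset.sum_le_sum fun j _ => integral_deriv_shiftMul_le f ψ x j) ?_
      exact Finset.sum_le_sum_of_subset_of_nonneg
        (Finset.range_subset_range.2 (by omega)) (fun j _ _ => Abd_nonneg f ψ j)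
    calc (2 * (0:ℕ) + 2) ^ m * ∑ j ∈ Finset.range (m + 1),
          ∫ v : V, ‖iteratedFDeriv ℝ j (⇑(shiftMul f ψ x)) v‖
        ≤ 2 ^ (n + 1) * S := by
          norm_num
          exact mul_le_mul (by norm_num; exact pow_le_pow_right₀ (by norm_num) hm) h3
            (Finset.sum_nonneg fun j _ => integral_nonneg fun v => norm_nonneg _)
            (by positivity)
      _ = C₀ := rfl
  refine ⟨2 ^ (n + 1) * (2 * C₀), by positivity, fun x ξ => ?_⟩
  have hpos : (0:ℝ) < (1 + ‖ξ‖) ^ (n + 1) := by positivity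
  have hFn : (0:ℝ) ≤ ‖𝓕 (⇑(shiftMul f ψ x)) ξ‖ := norm_nonneg _
  have hmain : (1 + ‖ξ‖) ^ (n + 1) * ‖𝓕 (⇑(shiftMul f ψ x)) ξ‖ ≤ 2 ^ (n + 1) * (2 * C₀) := by
    rcases le_total ‖ξ‖ 1 with h1 | h1
    · have hp : (1 + ‖ξ‖) ^ (n + 1) ≤ 2 ^ (n + 1) :=
        pow_le_pow_left₀ (by positivity) (by linarith) _
      have h0 : ‖𝓕 (⇑(shiftMul f ψ x)) ξ‖ ≤ C₀ := by simpa using key x ξ 0 (by omega)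
      have := mul_le_mul hp h0 hFn (by positivity)
      nlinarith [pow_pos (show (0:ℝ) < 2 by norm_num) (n + 1)]
    · have hp : (1 + ‖ξ‖) ^ (n + 1) ≤ 2 ^ (n + 1) * ‖ξ‖ ^ (n + 1) := by
        rw [← mul_pow]
        exact pow_le_pow_left₀ (by positivity) (by linarith) _
      have h0 := key x ξ (n + 1) le_rfl
      calc (1 + ‖ξ‖) ^ (n + 1) * ‖𝓕 (⇑(shiftMul f ψ x)) ξ‖
          ≤ (2 ^ (n + 1) * ‖ξ‖ ^ (n + 1)) * ‖𝓕 (⇑(shiftMul f ψ x)) ξ‖ :=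
            mul_le_mul_of_nonneg_right hp hFn
        _ = 2 ^ (n + 1) * (‖ξ‖ ^ (n + 1) * ‖𝓕 (⇑(shiftMul f ψ x)) ξ‖) := by ring
        _ ≤ 2 ^ (n + 1) * C₀ := by
            exact mul_le_mul_of_nonneg_left h0 (by positivity)
        _ ≤ 2 ^ (n + 1) * (2 * C₀) := by
            nlinarith [pow_pos (show (0:ℝ) < 2 by norm_num) (n + 1)]
  calc ‖𝓕 (⇑(shiftMul f ψ x)) ξ‖
      = ((1 + ‖ξ‖) ^ (n + 1) * ‖𝓕 (⇑(shiftMul f ψ x)) ξ‖) * ((1 + ‖ξ‖) ^ (n + 1))⁻¹ := by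
        rw [mul_comm ((1 + ‖ξ‖) ^ (n + 1)) _, mul_assoc, mul_inv_cancel₀ hpos.ne', mul_one]
    _ ≤ 2 ^ (n + 1) * (2 * C₀) * ((1 + ‖ξ‖) ^ (n + 1))⁻¹ :=
        mul_le_mul_of_nonneg_right hmain (by positivity)

lemma stft_continuous (f ψ : 𝓢(V, ℂ)) :
    Continuous (fun p : V × V => STFT (⇑f) (⇑ψ) p.1 p.2) := by
  unfold STFT
  apply continuous_of_dominated (bound := fun s : V => ‖f s‖ * SchwartzMap.seminorm ℝ 0 0 ψ)
  · intro p
    refine Continuous.aestronglyMeasurable ?_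
    refine ((f.continuous.mul ?_).mul ?_)
    · exact continuous_star.comp (ψ.continuous.comp (continuous_id.sub continuous_const))
    · exact Complex.continuous_exp.comp
        ((Complex.continuous_ofReal.comp
          ((continuous_const.mul (continuous_const.inner continuous_id)).neg)).mul continuous_const)
  · intro p
    refine Filter.Eventually.of_forall fun s => ?_
    rw [norm_mul, norm_mul]
    have h1 : ‖Complex.exp ((-(2 * π * ⟪p.2, s⟫) : ℝ) * Complex.I)‖ = 1 := by
      rw [Complex.norm_exp_ofReal_mul_I]
    rw [h1, mul_one]
    have h2 : ‖(starRingEnd ℂ) (ψ (s - p.1))‖ = ‖ψ (s - p.1)‖ := norm_star _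
    rw [h2]
    exact mul_le_mul_of_nonneg_left (ψ.norm_le_seminorm ℝ (s - p.1)) (norm_nonneg _)
  · exact f.integrable.norm.mul_const _
  · refine Filter.Eventually.of_forall fun s => ?_
    refine (continuous_const.mul ?_).mul ?_
    · exact continuous_star.comp (ψ.continuous.comp (continuous_const.sub continuous_fst))
    · exact Complex.continuous_exp.comp
        ((Complex.continuous_ofReal.comp
          ((continuous_const.mul (continuous_snd.inner continuous_const)).neg)).mul continuous_const)

end main


end aux

open FourierTransform in
/-- STFT inversion formula on the Schwartz class, pointwise with absolute convergence:
`f(t) = (γ,ψ)⁻¹ ∬ V_ψ f(x,ξ) e^{2πi ξ·t} γ(t-x) dξ dx` whenever `(γ,ψ)_{L²} ≠ 0`. -/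
theorem stft_inversion {n : ℕ} (f ψ γ : 𝓢(EuclideanSpace ℝ (Fin n), ℂ))
    (hip : (∫ t, γ t * (starRingEnd ℂ) (ψ t)) ≠ 0) :
    ∀ t : EuclideanSpace ℝ (Fin n),
      Integrable (fun p : EuclideanSpace ℝ (Fin n) × EuclideanSpace ℝ (Fin n) =>
        STFT (⇑f) (⇑ψ) p.1 p.2 *
          Complex.exp (((2 * Real.pi * ⟪p.2, t⟫) : ℝ) * Complex.I) * γ (t - p.1)) ∧
      f t = (∫ t', γ t' * (starRingEnd ℂ) (ψ t'))⁻¹ *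
        ∫ p : EuclideanSpace ℝ (Fin n) × EuclideanSpace ℝ (Fin n),
          STFT (⇑f) (⇑ψ) p.1 p.2 *
            Complex.exp (((2 * Real.pi * ⟪p.2, t⟫) : ℝ) * Complex.I) * γ (t - p.1) := by
  intro t
  obtain ⟨C, hC0, hC⟩ := fourier_decay f ψ
  set Φ : EuclideanSpace ℝ (Fin n) × EuclideanSpace ℝ (Fin n) → ℂ := fun p =>
    STFT (⇑f) (⇑ψ) p.1 p.2 *
      Complex.exp (((2 * Real.pi * ⟪p.2, t⟫) : ℝ) * Complex.I) * γ (t - p.1) with hΦ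
  -- continuity of Φ
  have hexp : Continuous fun p : EuclideanSpace ℝ (Fin n) × EuclideanSpace ℝ (Fin n) =>
      Complex.exp (((2 * Real.pi * ⟪p.2, t⟫) : ℝ) * Complex.I) :=
    Complex.continuous_exp.comp
      ((Complex.continuous_ofReal.comp
        (continuous_const.mul (continuous_snd.inner continuous_const))).mul continuous_const)
  have hγcont : Continuous fun p : EuclideanSpace ℝ (Fin n) × EuclideanSpace ℝ (Fin n) => γ (t - p.1) :=
    γ.continuous.comp (continuous_const.sub continuous_fst)
  have hΦcont : Continuous Φ := ((stft_continuous f ψ).mul hexp).mul hγcont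
  -- the integrable bound
  have hγint : Integrable (fun x : EuclideanSpace ℝ (Fin n) => ‖γ (t - x)‖) :=
    (γ.integrable.norm).comp_sub_left t
  have hξint : Integrable (fun ξ : EuclideanSpace ℝ (Fin n) => C * ((1 + ‖ξ‖) ^ (n + 1))⁻¹) := by
    have h := (integrable_one_add_norm (E := EuclideanSpace ℝ (Fin n)) (μ := volume) (r := (n + 1 : ℝ))
      (by rw [finrank_euclideanSpace_fin]; exact_mod_cast lt_add_one n)).const_mul C
    refine h.congr (Filter.Eventually.of_forall fun ξ => ?_)
    show C * (1 + ‖ξ‖) ^ (-((n : ℝ) + 1)) = C * ((1 + ‖ξ‖) ^ (n + 1))⁻¹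
    rw [show ((1 + ‖ξ‖) ^ (n + 1 : ℕ))⁻¹ = (1 + ‖ξ‖) ^ (-((n : ℝ) + 1)) from by
      rw [← Real.rpow_natCast (1 + ‖ξ‖) (n + 1), ← Real.rpow_neg (by positivity)]
      norm_num]
  have hprod : Integrable
      (fun p : EuclideanSpace ℝ (Fin n) × EuclideanSpace ℝ (Fin n) => ‖γ (t - p.1)‖ * (C * ((1 + ‖p.2‖) ^ (n + 1))⁻¹)) := by
    rw [MeasureTheory.Measure.volume_eq_prod]
    exact hγint.mul_prod hξint
  -- pointwise bound
  have hΦbd : ∀ p : EuclideanSpace ℝ (Fin n) × EuclideanSpace ℝ (Fin n), ‖Φ p‖ ≤ ‖γ (t - p.1)‖ * (C * ((1 + ‖p.2‖) ^ (n + 1))⁻¹) := by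
    intro p
    rw [hΦ]
    simp only [norm_mul]
    have h1 : ‖Complex.exp (((2 * Real.pi * ⟪p.2, t⟫) : ℝ) * Complex.I)‖ = 1 := by
      rw [Complex.norm_exp_ofReal_mul_I]
    rw [h1, mul_one, stft_eq f ψ p.1 p.2]
    calc ‖𝓕 (⇑(shiftMul f ψ p.1)) p.2‖ * ‖γ (t - p.1)‖
        ≤ (C * ((1 + ‖p.2‖) ^ (n + 1))⁻¹) * ‖γ (t - p.1)‖ :=
          mul_le_mul_of_nonneg_right (hC p.1 p.2) (norm_nonneg _)
      _ = ‖γ (t - p.1)‖ * (C * ((1 + ‖p.2‖) ^ (n + 1))⁻¹) := by ring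
  have hΦint : Integrable Φ :=
    hprod.mono' hΦcont.aestronglyMeasurable (Filter.Eventually.of_forall hΦbd)
  refine ⟨hΦint, ?_⟩
  -- Fourier inversion for each x
  have hFint : ∀ x : EuclideanSpace ℝ (Fin n), Integrable (𝓕 (⇑(shiftMul f ψ x))) := by
    intro x
    have := (SchwartzMap.fourierTransformCLM ℝ (shiftMul f ψ x)).integrable (μ := volume)
    rwa [SchwartzMap.fourierTransformCLM_apply, SchwartzMap.fourier_coe] at this
  have hinv : ∀ x : EuclideanSpace ℝ (Fin n),
      (∫ ξ : EuclideanSpace ℝ (Fin n), 𝓕 (⇑(shiftMul f ψ x)) ξ *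
        Complex.exp (((2 * Real.pi * ⟪ξ, t⟫) : ℝ) * Complex.I))
      = f t * (starRingEnd ℂ) (ψ (t - x)) := by
    intro x
    have h1 : 𝓕⁻ (𝓕 ⇑(shiftMul f ψ x)) t = shiftMul f ψ x t :=
      (shiftMul f ψ x).integrable.fourierInv_fourier_eq (hFint x)
        ((shiftMul f ψ x).continuous.continuousAt)
    rw [← shiftMul_apply f ψ x t, ← h1, Real.fourierInv_eq']
    refine integral_congr_ae (Filter.Eventually.of_forall fun ξ => ?_)
    simp only [smul_eq_mul]
    ring
  -- Fubini
  have hsplit : (∫ p : EuclideanSpace ℝ (Fin n) × EuclideanSpace ℝ (Fin n), Φ p) = ∫ x : EuclideanSpace ℝ (Fin n), ∫ ξ : EuclideanSpace ℝ (Fin n), Φ (x, ξ) := by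
    rw [MeasureTheory.Measure.volume_eq_prod] at hΦint ⊢
    exact MeasureTheory.integral_prod Φ hΦint
  have hinner : ∀ x : EuclideanSpace ℝ (Fin n), (∫ ξ : EuclideanSpace ℝ (Fin n), Φ (x, ξ)) = f t * (starRingEnd ℂ) (ψ (t - x)) * γ (t - x) := by
    intro x
    rw [hΦ]
    simp only
    rw [MeasureTheory.integral_mul_const]
    congr 1
    rw [← hinv x]
    refine integral_congr_ae (Filter.Eventually.of_forall fun ξ => ?_)
    simp only [stft_eq f ψ x]
  have houter : (∫ x : EuclideanSpace ℝ (Fin n), f t * (starRingEnd ℂ) (ψ (t - x)) * γ (t - x))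
      = f t * ∫ t', γ t' * (starRingEnd ℂ) (ψ t') := by
    have h2 : (∫ x : EuclideanSpace ℝ (Fin n), f t * (starRingEnd ℂ) (ψ (t - x)) * γ (t - x))
        = ∫ x : EuclideanSpace ℝ (Fin n), f t * ((starRingEnd ℂ) (ψ (t - x)) * γ (t - x)) := by
      refine integral_congr_ae (Filter.Eventually.of_forall fun x => ?_); ring
    rw [h2, MeasureTheory.integral_const_mul]
    congr 1
    have h3 := MeasureTheory.integral_sub_left_eq_self
      (fun u : EuclideanSpace ℝ (Fin n) => (starRingEnd ℂ) (ψ u) * γ u) volume t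
    rw [h3]
    exact integral_congr_ae (Filter.Eventually.of_forall fun u => mul_comm _ _)
  rw [hsplit]
  have : (∫ x : EuclideanSpace ℝ (Fin n), ∫ ξ : EuclideanSpace ℝ (Fin n), Φ (x, ξ)) = f t * ∫ t', γ t' * (starRingEnd ℂ) (ψ t') := by
    rw [← houter]
    exact integral_congr_ae (Filter.Eventually.of_forall fun x => hinner x)
  rw [this, mul_comm (f t), ← mul_assoc, inv_mul_cancel₀ hip, one_mul]
end
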